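/- The second leading coefficient τ_{2q+1} of P_{2q+1} (the coefficient of m^q) equals (2q-1)·binom(2(q-1), q-1) for all q ≥ 1, with τ_1 = 0. -/

import Mathlib

open Polynomial Finset

private def cc (q : ℕ) : ℤ := catalan q
private def E (q : ℕ) : ℤ := (2*(q:ℤ) - 1) * cc (q - 1)
private def T (q : ℕ) : ℤ := (q:ℤ) * E q

private lemma T_zero : T 0 = 0 := by simp [T]

private lemma catalan_conv (n : ℕ) : cc (n+1) = ∑ j ∈ range (n+1), cc j * cc (n - j) := by
  unfold cc
  rw [catalan_succ]
  push_cast [← Fin.sum_univ_eq_sum_range]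
  rfl

private lemma key (n : ℕ) :
    ∑ j ∈ range n, (2*((n:ℤ) - (j:ℤ)) - 1) * (cc j * cc (n-1-j)) = n * cc n := by
  rcases n with _ | m
  · simp
  set n := m + 1
  have h2 : (2:ℤ) * (∑ j ∈ range n, (2*((n:ℤ) - (j:ℤ)) - 1) * (cc j * cc (n-1-j)))
      = 2 * (n * cc n) := by
    have hrev := Finset.sum_range_reflect
      (fun j => (2*((n:ℤ) - (j:ℤ)) - 1) * (cc j * cc (n-1-j))) n
    have hconv : cc n = ∑ j ∈ range n, cc j * cc (n-1-j) := by
      have := catalan_conv m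
      exact this
    calc (2:ℤ) * (∑ j ∈ range n, (2*((n:ℤ) - (j:ℤ)) - 1) * (cc j * cc (n-1-j)))
        = (∑ j ∈ range n, (2*((n:ℤ) - (j:ℤ)) - 1) * (cc j * cc (n-1-j)))
          + ∑ j ∈ range n, (2*((n:ℤ) - ((n-1-j : ℕ):ℤ)) - 1) * (cc (n-1-j) * cc (n-1-(n-1-j))) := by
          rw [hrev]; ring
      _ = ∑ j ∈ range n, ((2*((n:ℤ) - (j:ℤ)) - 1) * (cc j * cc (n-1-j))
          + (2*((n:ℤ) - ((n-1-j : ℕ):ℤ)) - 1) * (cc (n-1-j) * cc (n-1-(n-1-j)))) := by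
          rw [Finset.sum_add_distrib]
      _ = ∑ j ∈ range n, (2*(n:ℤ)) * (cc j * cc (n-1-j)) := by
          apply Finset.sum_congr rfl
          intro j hj
          rw [Finset.mem_range] at hj
          have h1 : n - 1 - (n-1-j) = j := by omega
          have h2 : ((n-1-j : ℕ):ℤ) = (n:ℤ) - 1 - (j:ℤ) := by
            have : (n:ℤ) = (m:ℤ) + 1 := by show ((m+1:ℕ):ℤ) = (m:ℤ) + 1; push_cast; ring
            omega
          rw [h1, h2]
          ring
      _ = 2 * (n * cc n) := by
          rw [← Finset.mul_sum, hconv]; ring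
  exact mul_left_cancel₀ (two_ne_zero) h2

private lemma Erec (m : ℕ) : E (m+1) = cc m + 2 * ∑ j ∈ range m, cc j * E (m - j) := by
  have hs : ∑ j ∈ range m, cc j * E (m - j)
      = ∑ j ∈ range m, (2*((m:ℤ) - (j:ℤ)) - 1) * (cc j * cc (m-1-j)) := by
    apply Finset.sum_congr rfl
    intro j hj
    rw [Finset.mem_range] at hj
    have h1 : ((m - j : ℕ):ℤ) = (m:ℤ) - (j:ℤ) := by omega
    have h2 : m - j - 1 = m - 1 - j := by omega
    rw [E, h1, h2]
    ring
  rw [hs, key m, E]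
  have : ((m + 1 : ℕ):ℤ) = (m:ℤ) + 1 := by push_cast; ring
  rw [this]
  simp only [Nat.add_sub_cancel]
  ring

private lemma Trec (m : ℕ) : T (m+1) = E (m+1) + 2 * ∑ j ∈ range (m+1), cc j * T (m - j)
    + ∑ i ∈ range m, E (i+1) * E (m - i) := by
  rw [Finset.sum_range_succ]
  have hT0 : T (m - m) = 0 := by simp [T]
  rw [hT0, mul_zero, add_zero]
  have hcomb : 2 * ∑ j ∈ range m, cc j * T (m - j) + ∑ i ∈ range m, E (i+1) * E (m - i)
      = ∑ j ∈ range m, ((2*(m:ℤ)+1) * ((2*((m:ℤ) - (j:ℤ)) - 1) * (cc j * cc (m-1-j)))) := by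
    rw [Finset.mul_sum, ← Finset.sum_add_distrib]
    apply Finset.sum_congr rfl
    intro j hj
    rw [Finset.mem_range] at hj
    have h1 : ((m - j : ℕ):ℤ) = (m:ℤ) - (j:ℤ) := by omega
    have h2 : m - j - 1 = m - 1 - j := by omega
    have h3 : ((j + 1 : ℕ):ℤ) = (j:ℤ) + 1 := by push_cast; ring
    simp only [T, E, h1, h2, h3, Nat.add_sub_cancel]
    ring
  rw [add_assoc, hcomb, ← Finset.mul_sum, key m]
  simp only [T, E]
  have : ((m + 1 : ℕ):ℤ) = (m:ℤ) + 1 := by push_cast; ring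
  rw [this]
  simp only [Nat.add_sub_cancel]
  ring


private lemma comp_coeff (p : Polynomial ℤ) (i : ℕ) :
    (p.comp (X+1)).coeff i = ∑ k ∈ range (p.natDegree + 1), p.coeff k * (k.choose i : ℤ) := by
  rw [comp_eq_sum_left, Polynomial.sum_def, finset_sum_coeff]
  rw [Finset.sum_subset p.supp_subset_range_natDegree_succ
    (fun k _ hk => by rw [Polynomial.notMem_support_iff.1 hk]; simp)]
  apply Finset.sum_congr rfl
  intro k _
  rw [coeff_C_mul, coeff_X_add_one_pow]

private lemma comp_coeff' (p : Polynomial ℤ) {d : ℕ} (h : p.natDegree ≤ d) (i : ℕ) :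
    (p.comp (X+1)).coeff i = ∑ k ∈ range (d + 1), p.coeff k * (k.choose i : ℤ) := by
  rw [comp_coeff]
  apply Finset.sum_subset
  · exact Finset.range_subset_range.2 (by omega)
  · intro k hk hnk
    rw [Finset.mem_range] at hk hnk
    have : p.natDegree < k := by omega
    rw [coeff_eq_zero_of_natDegree_lt this, zero_mul]

private lemma comp_coeff_top (p : Polynomial ℤ) {d : ℕ} (h : p.natDegree ≤ d) :
    (p.comp (X+1)).coeff d = p.coeff d := by
  rw [comp_coeff' p h d, Finset.sum_range_succ]
  rw [Finset.sum_eq_zero, Nat.choose_self]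
  · simp
  · intro k hk
    rw [Finset.mem_range] at hk
    rw [Nat.choose_eq_zero_of_lt hk]
    simp

private lemma comp_coeff_subtop (p : Polynomial ℤ) {d : ℕ} (h : p.natDegree ≤ d + 1) :
    (p.comp (X+1)).coeff d = p.coeff d + ((d:ℤ) + 1) * p.coeff (d+1) := by
  rw [comp_coeff' p h d, Finset.sum_range_succ, Finset.sum_range_succ]
  rw [Finset.sum_eq_zero, Nat.choose_self, Nat.choose_succ_self_right]
  · push_cast; ring
  · intro k hk
    rw [Finset.mem_range] at hk
    rw [Nat.choose_eq_zero_of_lt hk]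
    simp

private lemma mul_coeff_top (f g : Polynomial ℤ) {a b : ℕ} (hf : f.natDegree ≤ a)
    (hg : g.natDegree ≤ b) : (f*g).coeff (a+b) = f.coeff a * g.coeff b := by
  rw [coeff_mul]
  apply Finset.sum_eq_single (a, b)
  · intro p hp hne
    rw [Finset.HasAntidiagonal.mem_antidiagonal] at hp
    rcases lt_or_ge a p.1 with h | h
    · rw [coeff_eq_zero_of_natDegree_lt (lt_of_le_of_lt hf h), zero_mul]
    · have : b < p.2 ∨ p = (a, b) := by
        rcases p with ⟨x, y⟩
        simp only [Prod.mk.injEq] at *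
        omega
      rcases this with h' | h'
      · rw [coeff_eq_zero_of_natDegree_lt (lt_of_le_of_lt hg h'), mul_zero]
      · exact absurd h' hne
  · intro h
    exact absurd (by simp : (a, b) ∈ Finset.HasAntidiagonal.antidiagonal (a+b)) h

private lemma mul_coeff_subtop (f g : Polynomial ℤ) {a b : ℕ} (hf : f.natDegree ≤ a+1)
    (hg : g.natDegree ≤ b+1) :
    (f*g).coeff (a+b+1) = f.coeff (a+1) * g.coeff b + f.coeff a * g.coeff (b+1) := by
  rw [coeff_mul, Finset.Nat.sum_antidiagonal_eq_sum_range_succ_mk]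
  have hsub : ({a, a+1} : Finset ℕ) ⊆ range (a+b+1+1) := by
    intro k hk
    simp only [Finset.mem_insert, Finset.mem_singleton] at hk
    rw [Finset.mem_range]
    omega
  rw [← Finset.sum_subset hsub]
  · rw [Finset.sum_pair (by omega : a ≠ a + 1)]
    have h1 : a + b + 1 - a = b + 1 := by omega
    have h2 : a + b + 1 - (a + 1) = b := by omega
    rw [h1, h2]
    ring
  · intro k hk hnk
    rw [Finset.mem_range] at hk
    simp only [Finset.mem_insert, Finset.mem_singleton] at hnk
    rcases lt_or_ge (a+1) k with h | h
    · rw [coeff_eq_zero_of_natDegree_lt (lt_of_le_of_lt hf h), zero_mul]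
    · have : g.natDegree < a + b + 1 - k := by omega
      rw [coeff_eq_zero_of_natDegree_lt this, mul_zero]

private lemma sum_split_even (g : ℕ → Polynomial ℤ) (m : ℕ) :
    ∑ k ∈ range (2*m), g k = ∑ a ∈ range m, g (2*a) + ∑ a ∈ range m, g (2*a+1) := by
  induction m with
  | zero => simp
  | succ m ih =>
    have h : 2*(m+1) = 2*m + 1 + 1 := by ring
    rw [h, Finset.sum_range_succ, Finset.sum_range_succ, ih,
      Finset.sum_range_succ, Finset.sum_range_succ]
    ring

private lemma sum_split_odd (g : ℕ → Polynomial ℤ) (m : ℕ) :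
    ∑ k ∈ range (2*m+1), g k = ∑ a ∈ range (m+1), g (2*a) + ∑ a ∈ range m, g (2*a+1) := by
  rw [Finset.sum_range_succ, sum_split_even, Finset.sum_range_succ]
  ring
theorem second_leading_coeff_odd
    (P : ℕ → Polynomial ℤ)
    (hP0 : P 0 = 0)
    (hP1 : P 1 = X)
    (hPrec : ∀ n, 1 ≤ n →
      P (n + 1) = (P n).comp (X + 1) + ∑ k ∈ Finset.Icc 1 (n - 1), P k * P (n - k)) :
    (P 1).coeff 0 = 0 ∧
    (∀ q, 1 ≤ q →
      (P (2 * q + 1)).coeff q =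
        (2 * (q : ℤ) - 1) * Nat.choose (2 * (q - 1)) (q - 1)) := by
  have hdeg1 : ((X : Polynomial ℤ) + 1).natDegree = 1 := by
    simpa using natDegree_X_add_C (1 : ℤ)
  have main : ∀ n : ℕ,
      (∀ q, n = 2*q → (P n).natDegree ≤ q ∧ (1 ≤ q → (P n).coeff q = E q)) ∧
      (∀ q, n = 2*q+1 → (P n).natDegree ≤ q+1 ∧ (P n).coeff (q+1) = cc q ∧ (P n).coeff q = T q) := by
    intro n
    induction n using Nat.strong_induction_on with
    | _ n ih =>
    rcases n with _ | n1
    · constructor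
      · intro q hq
        have hq0 : q = 0 := by omega
        subst hq0
        simp [hP0]
      · intro q hq
        exact absurd hq (by omega)
    rcases n1 with _ | m
    · constructor
      · intro q hq
        exact absurd hq (by omega)
      · intro q hq
        have hq0 : q = 0 := by omega
        subst hq0
        refine ⟨by simp [hP1], by simp [hP1, cc], by simp [hP1, T]⟩
    -- n = m + 2
    have ihodd : ∀ a, 2*a+1 < m+1+1 →
        (P (2*a+1)).natDegree ≤ a+1 ∧ (P (2*a+1)).coeff (a+1) = cc a ∧ (P (2*a+1)).coeff a = T a :=
      fun a h => (ih (2*a+1) h).2 a rfl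
    have iheven : ∀ a, 2*a < m+1+1 →
        (P (2*a)).natDegree ≤ a ∧ (1 ≤ a → (P (2*a)).coeff a = E a) :=
      fun a h => (ih (2*a) h).1 a rfl
    have hrec := hPrec (m+1) (by omega)
    have hIcc : ∑ k ∈ Finset.Icc 1 (m+1-1), P k * P (m+1-k)
        = ∑ j ∈ range m, P (1+j) * P (m+1-(1+j)) := by
      have h1 : Finset.Icc 1 (m+1-1) = Finset.Ico 1 (m+1) := by
        rw [Nat.add_sub_cancel, ← Finset.Ico_add_one_right_eq_Icc]
      rw [h1, Finset.sum_Ico_eq_sum_range, Nat.add_sub_cancel]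
    rcases Nat.even_or_odd m with ⟨t, ht⟩ | ⟨t, ht⟩
    · -- m = 2t, n = 2t+2 even, q = t+1
      have hm : m = 2*t := by omega
      subst hm
      clear ht
      have hsum : ∑ j ∈ range (2*t), P (1+j) * P (2*t+1-(1+j))
          = ∑ a ∈ range t, P (2*a+1) * P (2*(t-a))
            + ∑ a ∈ range t, P (2*(a+1)) * P (2*(t-1-a)+1) := by
        rw [sum_split_even (fun j => P (1+j) * P (2*t+1-(1+j))) t]
        congr 1
        · apply Finset.sum_congr rfl
          intro a ha
          rw [Finset.mem_range] at ha
          show P (1 + 2*a) * P (2*t+1 - (1 + 2*a)) = P (2*a+1) * P (2*(t-a))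
          have e1 : 1 + 2*a = 2*a+1 := by omega
          have e2 : 2*t+1 - (2*a+1) = 2*(t-a) := by omega
          rw [e1, e2]
        · apply Finset.sum_congr rfl
          intro a ha
          rw [Finset.mem_range] at ha
          show P (1 + (2*a+1)) * P (2*t+1 - (1 + (2*a+1))) = P (2*(a+1)) * P (2*(t-1-a)+1)
          have e1 : 1 + (2*a+1) = 2*(a+1) := by omega
          have e2 : 2*t+1 - (2*(a+1)) = 2*(t-1-a)+1 := by omega
          rw [e1, e2]
      rw [hIcc, hsum] at hrec
      have hdegodd : (P (2*t+1)).natDegree ≤ t+1 := (ihodd t (by omega)).1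
      have hdegcomp : ((P (2*t+1)).comp (X+1)).natDegree ≤ t+1 := by
        refine le_trans natDegree_comp_le ?_
        rw [hdeg1, mul_one]
        exact hdegodd
      have hdegB : ∀ a ∈ range t, (P (2*a+1) * P (2*(t-a))).natDegree ≤ t+1 := by
        intro a ha
        rw [Finset.mem_range] at ha
        refine le_trans natDegree_mul_le ?_
        have h1 := (ihodd a (by omega)).1
        have h2 := (iheven (t-a) (by omega)).1
        omega
      have hdegC : ∀ a ∈ range t, (P (2*(a+1)) * P (2*(t-1-a)+1)).natDegree ≤ t+1 := by
        intro a ha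
        rw [Finset.mem_range] at ha
        refine le_trans natDegree_mul_le ?_
        have h1 := (iheven (a+1) (by omega)).1
        have h2 := (ihodd (t-1-a) (by omega)).1
        omega
      have hdeg : (P (2*t+1+1)).natDegree ≤ t+1 := by
        rw [hrec]
        refine le_trans (natDegree_add_le _ _) ?_
        rw [max_le_iff]
        refine ⟨hdegcomp, le_trans (natDegree_add_le _ _) ?_⟩
        rw [max_le_iff]
        exact ⟨natDegree_sum_le_of_forall_le _ _ hdegB, natDegree_sum_le_of_forall_le _ _ hdegC⟩
      constructor
      · intro q hq
        have hq1 : q = t+1 := by omega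
        subst hq1
        refine ⟨hdeg, fun _ => ?_⟩
        rw [hrec, coeff_add, coeff_add, finset_sum_coeff, finset_sum_coeff]
        have hA : ((P (2*t+1)).comp (X+1)).coeff (t+1) = cc t := by
          rw [comp_coeff_top _ hdegodd]
          exact (ihodd t (by omega)).2.1
        have hB : ∑ a ∈ range t, (P (2*a+1) * P (2*(t-a))).coeff (t+1)
            = ∑ a ∈ range t, cc a * E (t-a) := by
          apply Finset.sum_congr rfl
          intro a ha
          rw [Finset.mem_range] at ha
          have h1 := (ihodd a (by omega))
          have h2 := (iheven (t-a) (by omega))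
          have hmc := mul_coeff_top (P (2*a+1)) (P (2*(t-a))) h1.1 h2.1
          have he : (a+1) + (t-a) = t+1 := by omega
          rw [he] at hmc
          rw [hmc, h1.2.1, h2.2 (by omega)]
        have hC : ∑ a ∈ range t, (P (2*(a+1)) * P (2*(t-1-a)+1)).coeff (t+1)
            = ∑ a ∈ range t, E (a+1) * cc (t-1-a) := by
          apply Finset.sum_congr rfl
          intro a ha
          rw [Finset.mem_range] at ha
          have h1 := (iheven (a+1) (by omega))
          have h2 := (ihodd (t-1-a) (by omega))
          have hmc := mul_coeff_top (P (2*(a+1))) (P (2*(t-1-a)+1)) h1.1 h2.1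
          have he : (a+1) + ((t-1-a)+1) = t+1 := by omega
          rw [he] at hmc
          rw [hmc, h1.2 (by omega), h2.2.1]
        have hrefl : ∑ a ∈ range t, E (a+1) * cc (t-1-a) = ∑ a ∈ range t, cc a * E (t-a) := by
          rw [← Finset.sum_range_reflect (fun a => cc a * E (t-a)) t]
          apply Finset.sum_congr rfl
          intro a ha
          rw [Finset.mem_range] at ha
          show E (a+1) * cc (t-1-a) = cc (t-1-a) * E (t - (t-1-a))
          have he : t - (t-1-a) = a+1 := by omega
          rw [he, mul_comm]
        rw [hA, hB, hC, hrefl, Erec t]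
        ring
      · intro q hq
        exact absurd hq (by omega)
    · -- m = 2t+1, n = 2t+3 odd, q = t+1
      subst ht
      have hsum : ∑ j ∈ range (2*t+1), P (1+j) * P (2*t+1+1-(1+j))
          = ∑ a ∈ range (t+1), P (2*a+1) * P (2*(t-a)+1)
            + ∑ a ∈ range t, P (2*(a+1)) * P (2*(t-a)) := by
        rw [sum_split_odd (fun j => P (1+j) * P (2*t+1+1-(1+j))) t]
        congr 1
        · apply Finset.sum_congr rfl
          intro a ha
          rw [Finset.mem_range] at ha
          show P (1 + 2*a) * P (2*t+1+1 - (1 + 2*a)) = P (2*a+1) * P (2*(t-a)+1)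
          have e1 : 1 + 2*a = 2*a+1 := by omega
          have e2 : 2*t+1+1 - (2*a+1) = 2*(t-a)+1 := by omega
          rw [e1, e2]
        · apply Finset.sum_congr rfl
          intro a ha
          rw [Finset.mem_range] at ha
          show P (1 + (2*a+1)) * P (2*t+1+1 - (1 + (2*a+1))) = P (2*(a+1)) * P (2*(t-a))
          have e1 : 1 + (2*a+1) = 2*(a+1) := by omega
          have e2 : 2*t+1+1 - (2*(a+1)) = 2*(t-a) := by omega
          rw [e1, e2]
      rw [hIcc, hsum] at hrec
      have hdegeven : (P (2*t+1+1)).natDegree ≤ t+1 := by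
        have := (iheven (t+1) (by omega)).1
        have he : 2*(t+1) = 2*t+1+1 := by omega
        rwa [he] at this
      have hcoeffeven : (P (2*t+1+1)).coeff (t+1) = E (t+1) := by
        have := (iheven (t+1) (by omega)).2 (by omega)
        have he : 2*(t+1) = 2*t+1+1 := by omega
        rwa [he] at this
      have hdegcomp : ((P (2*t+1+1)).comp (X+1)).natDegree ≤ t+1 := by
        refine le_trans natDegree_comp_le ?_
        rw [hdeg1, mul_one]
        exact hdegeven
      have hdegB : ∀ a ∈ range (t+1), (P (2*a+1) * P (2*(t-a)+1)).natDegree ≤ t+2 := by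
        intro a ha
        rw [Finset.mem_range] at ha
        refine le_trans natDegree_mul_le ?_
        have h1 := (ihodd a (by omega)).1
        have h2 := (ihodd (t-a) (by omega)).1
        omega
      have hdegC : ∀ a ∈ range t, (P (2*(a+1)) * P (2*(t-a))).natDegree ≤ t+1 := by
        intro a ha
        rw [Finset.mem_range] at ha
        refine le_trans natDegree_mul_le ?_
        have h1 := (iheven (a+1) (by omega)).1
        have h2 := (iheven (t-a) (by omega)).1
        omega
      have hdeg : (P (2*t+1+1+1)).natDegree ≤ t+2 := by
        rw [hrec]
        refine le_trans (natDegree_add_le _ _) ?_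
        rw [max_le_iff]
        refine ⟨by omega, le_trans (natDegree_add_le _ _) ?_⟩
        rw [max_le_iff]
        constructor
        · exact natDegree_sum_le_of_forall_le _ _ hdegB
        · refine le_trans (natDegree_sum_le_of_forall_le _ _ hdegC) (by omega)
      constructor
      · intro q hq
        exact absurd hq (by omega)
      · intro q hq
        have hq1 : q = t+1 := by omega
        subst hq1
        refine ⟨hdeg, ?_, ?_⟩
        · -- coeff (t+2) = cc (t+1)
          rw [hrec, coeff_add, coeff_add, finset_sum_coeff, finset_sum_coeff]
          have hA : ((P (2*t+1+1)).comp (X+1)).coeff (t+2) = 0 :=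
            coeff_eq_zero_of_natDegree_lt (by omega)
          have hB : ∑ a ∈ range (t+1), (P (2*a+1) * P (2*(t-a)+1)).coeff (t+2)
              = ∑ a ∈ range (t+1), cc a * cc (t-a) := by
            apply Finset.sum_congr rfl
            intro a ha
            rw [Finset.mem_range] at ha
            have h1 := (ihodd a (by omega))
            have h2 := (ihodd (t-a) (by omega))
            have hmc := mul_coeff_top (P (2*a+1)) (P (2*(t-a)+1)) h1.1 h2.1
            have he : (a+1) + ((t-a)+1) = t+2 := by omega
            rw [he] at hmc
            rw [hmc, h1.2.1, h2.2.1]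
          have hC : ∑ a ∈ range t, (P (2*(a+1)) * P (2*(t-a))).coeff (t+2) = 0 := by
            apply Finset.sum_eq_zero
            intro a ha
            exact coeff_eq_zero_of_natDegree_lt (by have := hdegC a ha; omega)
          rw [hA, hB, hC, ← catalan_conv t]
          ring
        · -- coeff (t+1) = T (t+1)
          rw [hrec, coeff_add, coeff_add, finset_sum_coeff, finset_sum_coeff]
          have hA : ((P (2*t+1+1)).comp (X+1)).coeff (t+1) = E (t+1) := by
            rw [comp_coeff_top _ hdegeven]
            exact hcoeffeven
          have hB : ∑ a ∈ range (t+1), (P (2*a+1) * P (2*(t-a)+1)).coeff (t+1)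
              = ∑ a ∈ range (t+1), (cc a * T (t-a) + T a * cc (t-a)) := by
            apply Finset.sum_congr rfl
            intro a ha
            rw [Finset.mem_range] at ha
            have h1 := (ihodd a (by omega))
            have h2 := (ihodd (t-a) (by omega))
            have hmc := mul_coeff_subtop (P (2*a+1)) (P (2*(t-a)+1)) h1.1 h2.1
            have he : a + (t-a) + 1 = t+1 := by omega
            rw [he] at hmc
            rw [hmc, h1.2.1, h1.2.2, h2.2.1, h2.2.2]
          have hC : ∑ a ∈ range t, (P (2*(a+1)) * P (2*(t-a))).coeff (t+1)
              = ∑ a ∈ range t, E (a+1) * E (t-a) := by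
            apply Finset.sum_congr rfl
            intro a ha
            rw [Finset.mem_range] at ha
            have h1 := (iheven (a+1) (by omega))
            have h2 := (iheven (t-a) (by omega))
            have hmc := mul_coeff_top (P (2*(a+1))) (P (2*(t-a))) h1.1 h2.1
            have he : (a+1) + (t-a) = t+1 := by omega
            rw [he] at hmc
            rw [hmc, h1.2 (by omega), h2.2 (by omega)]
          have hrefl : ∑ a ∈ range (t+1), T a * cc (t-a)
              = ∑ a ∈ range (t+1), cc a * T (t-a) := by
            rw [← Finset.sum_range_reflect (fun a => cc a * T (t-a)) (t+1)]
            apply Finset.sum_congr rfl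
            intro a ha
            rw [Finset.mem_range] at ha
            show T a * cc (t-a) = cc (t+1-1-a) * T (t - (t+1-1-a))
            have e1 : t+1-1-a = t-a := by omega
            have e2 : t - (t-a) = a := by omega
            rw [e1, e2, mul_comm]
          rw [hA, hB, hC, Finset.sum_add_distrib, hrefl, Trec t]
          ring
  constructor
  · rw [hP1]
    simp
  · intro q hq
    obtain ⟨r, rfl⟩ : ∃ r, q = r+1 := ⟨q-1, by omega⟩
    have h := (main (2*(r+1)+1)).2 (r+1) rfl
    rw [h.2.2]
    have he : r + 1 - 1 = r := by omega
    rw [he]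
    have hcb : ((2*r).choose r : ℤ) = ((r:ℤ)+1) * (catalan r : ℤ) := by
      have := succ_mul_catalan_eq_centralBinom r
      have h2 : (2*r).choose r = (r+1) * catalan r := by
        rw [this]; rfl
      rw [h2]; push_cast; ring
    rw [hcb]
    show ((r+1:ℕ):ℤ) * E (r+1) = _
    rw [E]
    show _ = (2 * ((r+1:ℕ):ℤ) - 1) * (((r:ℤ)+1) * (catalan r : ℤ))
    have he2 : (r+1) - 1 = r := by omega
    rw [he2]
    show ((r+1:ℕ):ℤ) * ((2*((r+1:ℕ):ℤ) - 1) * (catalan r : ℤ)) = _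
    push_cast
    ring
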